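/- Let n ≥ p ≥ 1 and set a = p(p−1)/2, c = (n−p)p, d = p(p+1)/2 (so a + c + d = np). There exists an orthogonal np×np real matrix Q̂, depending only on n and p, such that for every real n×p matrix X with XᵀX = I_p and every real n×(n−p) matrix X⊥ with XᵀX⊥ = 0 and X⊥ᵀX⊥ = I_{n−p}, the matrix Q = [I_p⊗X, I_p⊗X⊥]·Q̂ is orthogonal and satisfies Qᵀ·S(X)·Q = diag(−I_a, O_c, I_d), where S(X) = (Xᵀ⊗X)·Π. -/

import Mathlib

open Matrix
open scoped Kronecker

/-- The commutation (vec-permutation) matrix `Π` with rows indexed by `Fin a × Fin b`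
and columns by `Fin b × Fin a`; entry `((j,i),(i',j'))` is `1` iff `i = i'` and `j = j'`. -/
def commMat (a b : ℕ) : Matrix (Fin a × Fin b) (Fin b × Fin a) ℝ :=
  fun r c => if r.1 = c.2 ∧ r.2 = c.1 then 1 else 0

noncomputable section Stmt7Aux

open Finset

def chi {α : Type*} [DecidableEq α] (q r : α) : ℝ := if r = q then 1 else 0

lemma dot_chi {α : Type*} [DecidableEq α] [Fintype α] (q q' : α) :
    ∑ r : α, chi q r * chi q' r = if q = q' then 1 else 0 := by
  simp [chi, ite_mul, Finset.sum_ite_eq']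
  simp [eq_comm]

lemma s2sq : (Real.sqrt 2)⁻¹ * (Real.sqrt 2)⁻¹ * 2 = 1 := by
  rw [← mul_inv]
  rw [← Real.sqrt_mul_self (by norm_num : (0:ℝ) ≤ 2)]
  field_simp
  rw [Real.sq_sqrt (Real.sqrt_nonneg _)]

abbrev ATy (p : ℕ) := {q : Fin p × Fin p // q.1 < q.2}
abbrev DTy (p : ℕ) := {q : Fin p × Fin p // q.1 ≤ q.2}
abbrev TTy (n p : ℕ) := ATy p ⊕ ((Fin p × Fin (n-p)) ⊕ DTy p)
abbrev RTy (n p : ℕ) := (Fin p × Fin p) ⊕ (Fin p × Fin (n-p))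

def dSplit (p : ℕ) : DTy p ≃ ATy p ⊕ Fin p where
  toFun d := if h : d.1.1 < d.1.2 then Sum.inl ⟨d.1, h⟩ else Sum.inr d.1.1
  invFun s := Sum.elim (fun a => ⟨a.1, le_of_lt a.2⟩) (fun i => ⟨(i, i), le_rfl⟩) s
  left_inv d := by
    rcases d with ⟨⟨i,j⟩, hij⟩
    rcases lt_or_eq_of_le hij with h | h
    · simp [h]
    · have h' : i = j := h
      subst h'
      simp [lt_irrefl]
  right_inv s := by
    rcases s with a | i
    · simp [a.2]
    · simp

lemma card_DTy (p : ℕ) : Fintype.card (DTy p) = p * (p + 1) / 2 := by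
  have h := (Fintype.card_congr (Sym2.sortEquiv (α := Fin p))).symm
  rw [Sym2.card, Fintype.card_fin, Nat.choose_two_right] at h
  rw [Nat.add_sub_cancel, mul_comm] at h
  exact h

lemma card_ATy (p : ℕ) : Fintype.card (ATy p) = p * (p - 1) / 2 := by
  have h := Fintype.card_congr (dSplit p)
  rw [card_DTy, Fintype.card_sum, Fintype.card_fin] at h
  obtain ⟨m, hm⟩ := Nat.even_mul_succ_self p
  rcases Nat.eq_zero_or_pos p with rfl | hp
  · simp at h ⊢
  · have h3 : p * (p - 1) + 2 * p = p * (p + 1) := by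
      cases p with
      | zero => omega
      | succ q => rw [Nat.add_sub_cancel]; ring
    omega

def vvec (n p : ℕ) : TTy n p → RTy n p → ℝ
  | Sum.inl a, Sum.inl r => (Real.sqrt 2)⁻¹ * (chi a.1 r - chi (a.1.2, a.1.1) r)
  | Sum.inl _, Sum.inr _ => 0
  | Sum.inr (Sum.inl _), Sum.inl _ => 0
  | Sum.inr (Sum.inl c), Sum.inr r => chi c r
  | Sum.inr (Sum.inr d), Sum.inl r =>
      (if d.1.1 = d.1.2 then (2:ℝ) else Real.sqrt 2)⁻¹ * (chi d.1 r + chi (d.1.2, d.1.1) r)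
  | Sum.inr (Sum.inr _), Sum.inr _ => 0

def lam (n p : ℕ) : TTy n p → ℝ
  | Sum.inl _ => -1
  | Sum.inr (Sum.inl _) => 0
  | Sum.inr (Sum.inr _) => 1

set_option linter.unreachableTactic false in
set_option linter.unusedTactic false in
lemma vvec_ortho (n p : ℕ) (s t : TTy n p) :
    ∑ r : RTy n p, vvec n p s r * vvec n p t r = if s = t then 1 else 0 := by
  rw [Fintype.sum_sum_type]
  rcases s with a | c | d <;> rcases t with a' | c' | d'
  case inl.inl =>
    rcases a with ⟨⟨i,j⟩, hij⟩; rcases a' with ⟨⟨i',j'⟩, hij'⟩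
    simp only [vvec, mul_zero, zero_mul, sum_const_zero, add_zero]
    have expand : ∀ r : Fin p × Fin p,
        ((Real.sqrt 2)⁻¹ * (chi (i,j) r - chi (j,i) r)) * ((Real.sqrt 2)⁻¹ * (chi (i',j') r - chi (j',i') r))
        = (Real.sqrt 2)⁻¹ * (Real.sqrt 2)⁻¹ *
          (chi (i,j) r * chi (i',j') r - chi (i,j) r * chi (j',i') r
            - chi (j,i) r * chi (i',j') r + chi (j,i) r * chi (j',i') r) := by
      intro r; ring
    rw [Finset.sum_congr rfl (fun r _ => expand r), ← Finset.mul_sum]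
    rw [Finset.sum_add_distrib, Finset.sum_sub_distrib, Finset.sum_sub_distrib,
      dot_chi, dot_chi, dot_chi, dot_chi]
    simp only [Sum.inl.injEq, Subtype.mk.injEq, Prod.mk.injEq, Fin.ext_iff] at *
    simp only [Fin.lt_def] at hij hij'
    split_ifs <;>
      first
        | contradiction
        | (exfalso; omega)
        | (norm_num; done)
        | linarith [s2sq]
        | (norm_num; linarith [s2sq])
  case inl.inr.inl =>
    simp [vvec]
  case inl.inr.inr =>
    rcases a with ⟨⟨i,j⟩, hij⟩; rcases d' with ⟨⟨i',j'⟩, hij'⟩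
    rw [if_neg (show ¬(Sum.inl ⟨(i,j),hij⟩ : TTy n p) = Sum.inr (Sum.inr ⟨(i',j'),hij'⟩) by simp)]
    simp only [vvec, mul_zero, zero_mul, sum_const_zero, add_zero]
    set c := (if ((i' : Fin p),(j' : Fin p)).1 = ((i',j') : Fin p × Fin p).2 then (2:ℝ) else Real.sqrt 2)⁻¹ with hc
    have expand : ∀ r : Fin p × Fin p,
        ((Real.sqrt 2)⁻¹ * (chi (i,j) r - chi (j,i) r)) * (c * (chi (i',j') r + chi (j',i') r))
        = (Real.sqrt 2)⁻¹ * c *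
          (chi (i,j) r * chi (i',j') r + chi (i,j) r * chi (j',i') r
            - chi (j,i) r * chi (i',j') r - chi (j,i) r * chi (j',i') r) := by
      intro r; ring
    rw [Finset.sum_congr rfl (fun r _ => expand r), ← Finset.mul_sum]
    rw [Finset.sum_sub_distrib, Finset.sum_sub_distrib, Finset.sum_add_distrib,
      dot_chi, dot_chi, dot_chi, dot_chi]
    simp only [Prod.mk.injEq, Fin.ext_iff]
    simp only [Fin.lt_def] at hij
    simp only [Fin.le_def] at hij'
    split_ifs <;> first | (exfalso; omega) | ring | (norm_num; done)
  case inr.inl.inl =>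
    simp [vvec]
  case inr.inl.inr.inl =>
    simp only [vvec, mul_zero, zero_mul, sum_const_zero, zero_add, dot_chi]
    simp
  case inr.inl.inr.inr =>
    simp [vvec]
  case inr.inr.inl =>
    rcases d with ⟨⟨i,j⟩, hij⟩; rcases a' with ⟨⟨i',j'⟩, hij'⟩
    rw [if_neg (show ¬(Sum.inr (Sum.inr ⟨(i,j),hij⟩) : TTy n p) = Sum.inl ⟨(i',j'),hij'⟩ by simp)]
    simp only [vvec, mul_zero, zero_mul, sum_const_zero, add_zero]
    set c := (if ((i : Fin p),(j : Fin p)).1 = ((i,j) : Fin p × Fin p).2 then (2:ℝ) else Real.sqrt 2)⁻¹ with hc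
    have expand : ∀ r : Fin p × Fin p,
        (c * (chi (i,j) r + chi (j,i) r)) * ((Real.sqrt 2)⁻¹ * (chi (i',j') r - chi (j',i') r))
        = (Real.sqrt 2)⁻¹ * c *
          ((chi (i,j) r * chi (i',j') r + chi (j,i) r * chi (i',j') r)
            - chi (i,j) r * chi (j',i') r - chi (j,i) r * chi (j',i') r) := by
      intro r; ring
    rw [Finset.sum_congr rfl (fun r _ => expand r), ← Finset.mul_sum]
    rw [Finset.sum_sub_distrib, Finset.sum_sub_distrib, Finset.sum_add_distrib,
      dot_chi, dot_chi, dot_chi, dot_chi]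
    simp only [Prod.mk.injEq, Fin.ext_iff]
    simp only [Fin.le_def] at hij
    simp only [Fin.lt_def] at hij'
    split_ifs <;> first | (exfalso; omega) | ring | (norm_num; done)
  case inr.inr.inr.inl =>
    simp [vvec]
  case inr.inr.inr.inr =>
    rcases d with ⟨⟨i,j⟩, hij⟩; rcases d' with ⟨⟨i',j'⟩, hij'⟩
    simp only [vvec, mul_zero, zero_mul, sum_const_zero, add_zero]
    have expand : ∀ (c c' : ℝ), ∀ r : Fin p × Fin p,
        (c * (chi (i,j) r + chi (j,i) r)) * (c' * (chi (i',j') r + chi (j',i') r))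
        = c * c' *
          (chi (i,j) r * chi (i',j') r + chi (i,j) r * chi (j',i') r
            + chi (j,i) r * chi (i',j') r + chi (j,i) r * chi (j',i') r) := by
      intro c c' r; ring
    rw [Finset.sum_congr rfl (fun r _ => expand _ _ r), ← Finset.mul_sum]
    rw [Finset.sum_add_distrib, Finset.sum_add_distrib, Finset.sum_add_distrib,
      dot_chi, dot_chi, dot_chi, dot_chi]
    simp only [Sum.inr.injEq, Sum.inl.injEq, Subtype.mk.injEq, Prod.mk.injEq]
    rcases eq_or_lt_of_le hij with hd | hd <;> rcases eq_or_lt_of_le hij' with hd' | hd'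
    · have h1 : i = j := hd
      have h2 : i' = j' := hd'
      subst h1; subst h2
      rw [if_pos rfl, if_pos rfl]
      simp only [Prod.mk.injEq, Fin.ext_iff]
      split_ifs <;> first | (exfalso; omega) | (norm_num; done)
    · have h1 : i = j := hd
      subst h1
      rw [if_pos rfl, if_neg (by simp only [Fin.ext_iff]; simp only [Fin.lt_def] at hd'; omega)]
      simp only [Prod.mk.injEq, Fin.ext_iff]
      simp only [Fin.lt_def] at hd'
      split_ifs <;> first | (exfalso; omega) | (norm_num; done)
    · have h2 : i' = j' := hd'
      subst h2
      rw [if_neg (by simp only [Fin.ext_iff]; simp only [Fin.lt_def] at hd; omega), if_pos rfl]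
      simp only [Prod.mk.injEq, Fin.ext_iff]
      simp only [Fin.lt_def] at hd
      split_ifs <;> first | (exfalso; omega) | (norm_num; done)
    · rw [if_neg (by simp only [Fin.ext_iff]; simp only [Fin.lt_def] at hd; omega),
        if_neg (by simp only [Fin.ext_iff]; simp only [Fin.lt_def] at hd'; omega)]
      simp only [Prod.mk.injEq, Fin.ext_iff]
      simp only [Fin.lt_def] at hd hd'
      split_ifs <;>
        first
          | (exfalso; omega)
          | (norm_num; done)
          | linarith [s2sq]
          | (norm_num; linarith [s2sq])

lemma chi_swap {p : ℕ} (i j x y : Fin p) : chi (i,j) (y,x) = chi (j,i) (x,y) := by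
  simp only [chi, Prod.mk.injEq]
  exact if_congr and_comm rfl rfl

lemma vvec_swap (n p : ℕ) (s : TTy n p) (x y : Fin p) :
    vvec n p s (Sum.inl (y, x)) = lam n p s * vvec n p s (Sum.inl (x, y)) := by
  rcases s with a | c | d
  · rcases a with ⟨⟨i,j⟩,h⟩
    simp only [vvec, lam, chi_swap]
    ring
  · simp [vvec, lam]
  · rcases d with ⟨⟨i,j⟩,h⟩
    simp only [vvec, lam, chi_swap]
    ring

lemma vvec_quad (n p : ℕ) (s t : TTy n p) :
    ∑ q : Fin p × Fin p, vvec n p s (Sum.inl (q.2, q.1)) * vvec n p t (Sum.inl q)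
      = lam n p s * (if s = t then 1 else 0) := by
  have hswap : ∀ q : Fin p × Fin p,
      vvec n p s (Sum.inl (q.2, q.1)) = lam n p s * vvec n p s (Sum.inl q) := fun q =>
    vvec_swap n p s q.1 q.2
  calc ∑ q : Fin p × Fin p, vvec n p s (Sum.inl (q.2, q.1)) * vvec n p t (Sum.inl q)
      = lam n p s * ∑ q : Fin p × Fin p, vvec n p s (Sum.inl q) * vvec n p t (Sum.inl q) := by
        rw [Finset.mul_sum]
        exact Finset.sum_congr rfl fun q _ => by rw [hswap q]; ring
    _ = lam n p s * (if s = t then 1 else 0) := by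
        rcases s with a | c | d
        · congr 1
          have h0 : ∀ w : Fin p × Fin (n - p), vvec n p (Sum.inl a) (Sum.inr w) = 0 := fun w => rfl
          have := vvec_ortho n p (Sum.inl a) t
          rw [Fintype.sum_sum_type] at this
          simpa [h0] using this
        · simp [lam]
        · congr 1
          have h0 : ∀ w : Fin p × Fin (n - p), vvec n p (Sum.inr (Sum.inr d)) (Sum.inr w) = 0 :=
            fun w => rfl
          have := vvec_ortho n p (Sum.inr (Sum.inr d)) t
          rw [Fintype.sum_sum_type] at this
          simpa [h0] using this

variable {n p q r : ℕ}

lemma S_apply (X : Matrix (Fin n) (Fin p) ℝ) (ij i'j' : Fin p × Fin n) :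
    ((Xᵀ ⊗ₖ X) * commMat n p) ij i'j' = X i'j'.2 ij.1 * X ij.2 i'j'.1 := by
  rw [mul_apply]
  rw [Fintype.sum_prod_type]
  simp only [kroneckerMap_apply, transpose_apply, commMat, mul_ite, mul_one, mul_zero, ite_and]
  rw [Finset.sum_comm]
  simp [Finset.sum_ite_eq]

lemma block_eval (X : Matrix (Fin n) (Fin p) ℝ) (Y : Matrix (Fin n) (Fin q) ℝ)
    (Z : Matrix (Fin n) (Fin r) ℝ) :
    ((1 : Matrix (Fin p) (Fin p) ℝ) ⊗ₖ Yᵀ) * ((Xᵀ ⊗ₖ X) * commMat n p) *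
        ((1 : Matrix (Fin p) (Fin p) ℝ) ⊗ₖ Z)
      = Matrix.of fun ab cd => (Yᵀ * X) ab.2 cd.1 * (Xᵀ * Z) ab.1 cd.2 := by
  ext ⟨a, b⟩ ⟨c, d⟩
  rw [mul_apply]
  simp only [Matrix.of_apply]
  rw [Fintype.sum_prod_type]
  have inner : ∀ i' j', (((1 : Matrix (Fin p) (Fin p) ℝ) ⊗ₖ Yᵀ) * ((Xᵀ ⊗ₖ X) * commMat n p))
      (a, b) (i', j') = (∑ j : Fin n, Y j b * X j i') * X j' a := by
    intro i' j'
    rw [mul_apply, Fintype.sum_prod_type]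
    simp only [kroneckerMap_apply, one_apply, S_apply, transpose_apply, ite_mul, one_mul, zero_mul]
    rw [Finset.sum_comm]
    simp only [Finset.sum_ite_eq, mem_univ, if_true]
    simp only [Finset.sum_mul]
    congr 1; ext x; ring
  simp only [inner, kroneckerMap_apply, one_apply, mul_ite, mul_one, mul_zero, ite_mul, zero_mul]
  rw [Finset.sum_comm]
  simp only [Finset.sum_ite_eq, Finset.sum_ite_eq', mem_univ, if_true]
  simp only [one_mul, mul_assoc]
  rw [← Finset.mul_sum]
  simp [mul_apply, transpose_apply]

lemma arith_acd (hp : 1 ≤ p) (hnp : p ≤ n) :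
    p * (p-1)/2 + (((n-p)) * p + p * (p+1)/2) = n * p := by
  obtain ⟨qq, rfl⟩ : ∃ qq, p = qq + 1 := ⟨p-1, by omega⟩
  obtain ⟨k, rfl⟩ : ∃ k, n = (qq+1) + k := ⟨n - (qq+1), by omega⟩
  obtain ⟨m, hm⟩ := Nat.even_mul_succ_self qq
  have h1 : (qq+1) * (qq+1-1) = m + m := by rw [Nat.add_sub_cancel, mul_comm]; exact hm
  have h2 : (qq+1) * (qq+1+1) = qq * (qq+1) + 2*(qq+1) := by ring
  have h3 : ((qq+1)+k - (qq+1)) * (qq+1) = k * (qq+1) := by rw [Nat.add_sub_cancel_left]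
  have h4 : ((qq+1)+k) * (qq+1) = (qq+1)*(qq+1) + k*(qq+1) := by ring
  have h5 : (qq+1)*(qq+1) = qq*(qq+1) + (qq+1) := by ring
  omega

end Stmt7Aux

set_option maxHeartbeats 1000000 in
theorem stmt7 (n p : ℕ) (hp : 1 ≤ p) (hnp : p ≤ n) :
    ∃ Qhat : Matrix ((Fin p × Fin p) ⊕ (Fin p × Fin (n - p))) (Fin (n * p)) ℝ,
      Qhatᵀ * Qhat = 1 ∧ Qhat * Qhatᵀ = 1 ∧
      ∀ (X : Matrix (Fin n) (Fin p) ℝ), Xᵀ * X = 1 →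
        ∀ (Xperp : Matrix (Fin n) (Fin (n - p)) ℝ), Xᵀ * Xperp = 0 → Xperpᵀ * Xperp = 1 →
          (Matrix.fromCols ((1 : Matrix (Fin p) (Fin p) ℝ) ⊗ₖ X)
                ((1 : Matrix (Fin p) (Fin p) ℝ) ⊗ₖ Xperp) * Qhat)ᵀ *
              (Matrix.fromCols ((1 : Matrix (Fin p) (Fin p) ℝ) ⊗ₖ X)
                ((1 : Matrix (Fin p) (Fin p) ℝ) ⊗ₖ Xperp) * Qhat) = 1 ∧
          (Matrix.fromCols ((1 : Matrix (Fin p) (Fin p) ℝ) ⊗ₖ X)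
                ((1 : Matrix (Fin p) (Fin p) ℝ) ⊗ₖ Xperp) * Qhat) *
              (Matrix.fromCols ((1 : Matrix (Fin p) (Fin p) ℝ) ⊗ₖ X)
                ((1 : Matrix (Fin p) (Fin p) ℝ) ⊗ₖ Xperp) * Qhat)ᵀ = 1 ∧
          (Matrix.fromCols ((1 : Matrix (Fin p) (Fin p) ℝ) ⊗ₖ X)
                ((1 : Matrix (Fin p) (Fin p) ℝ) ⊗ₖ Xperp) * Qhat)ᵀ *
              ((Xᵀ ⊗ₖ X) * commMat n p) *
              (Matrix.fromCols ((1 : Matrix (Fin p) (Fin p) ℝ) ⊗ₖ X)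
                ((1 : Matrix (Fin p) (Fin p) ℝ) ⊗ₖ Xperp) * Qhat) =
            Matrix.diagonal (fun i : Fin (n * p) =>
              if (i : ℕ) < p * (p - 1) / 2 then (-1 : ℝ)
              else if (i : ℕ) < p * (p - 1) / 2 + (n - p) * p then 0 else 1) := by
  classical
  -- index equivalence
  have hC : Fintype.card (Fin p × Fin (n-p)) = (n-p) * p := by
    simp [mul_comm]
  let eA : ATy p ≃ Fin (p * (p-1)/2) := Fintype.equivFinOfCardEq (card_ATy p)
  let eC : (Fin p × Fin (n-p)) ≃ Fin ((n-p) * p) := Fintype.equivFinOfCardEq hC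
  let eD : DTy p ≃ Fin (p * (p+1)/2) := Fintype.equivFinOfCardEq (card_DTy p)
  have hacd : p * (p-1)/2 + ((n-p) * p + p * (p+1)/2) = n * p := arith_acd hp hnp
  let ψ : TTy n p ≃ Fin (n * p) :=
    ((eA.sumCongr (eC.sumCongr eD)).trans
      ((Equiv.refl (Fin (p * (p-1)/2))).sumCongr finSumFinEquiv)).trans
      (finSumFinEquiv.trans (finCongr hacd))
  have hψval : ∀ t : TTy n p,
      lam n p t = if ((ψ t : ℕ)) < p * (p-1)/2 then (-1:ℝ)
        else if ((ψ t : ℕ)) < p * (p-1)/2 + (n-p) * p then 0 else 1 := by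
    intro t
    rcases t with x | y | z
    · have hv : ((ψ (Sum.inl x) : ℕ)) = (eA x : ℕ) := by
        simp [ψ, finSumFinEquiv_apply_left]
      rw [hv, if_pos (eA x).is_lt]
      rfl
    · have hv : ((ψ (Sum.inr (Sum.inl y)) : ℕ)) = p * (p-1)/2 + (eC y : ℕ) := by
        simp [ψ, finSumFinEquiv_apply_left, finSumFinEquiv_apply_right]
      rw [hv]
      rw [if_neg (by omega), if_pos (by have := (eC y).is_lt; omega)]
      rfl
    · have hv : ((ψ (Sum.inr (Sum.inr z)) : ℕ)) = p * (p-1)/2 + ((n-p)*p + (eD z : ℕ)) := by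
        simp [ψ, finSumFinEquiv_apply_left, finSumFinEquiv_apply_right]
      rw [hv]
      rw [if_neg (by omega), if_neg (by omega)]
      rfl
  set Qhat : Matrix (RTy n p) (Fin (n * p)) ℝ :=
    Matrix.of fun r k => vvec n p (ψ.symm k) r with hQhatdef
  have hQtQ : Qhatᵀ * Qhat = 1 := by
    ext k l
    rw [Matrix.mul_apply, Matrix.one_apply]
    simp only [hQhatdef, Matrix.transpose_apply, Matrix.of_apply]
    rw [vvec_ortho n p (ψ.symm k) (ψ.symm l)]
    simp [Equiv.symm_apply_eq]
  have hcardR : Fintype.card (RTy n p) = Fintype.card (Fin (n * p)) := by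
    obtain ⟨k, rfl⟩ : ∃ k, n = p + k := ⟨n - p, by omega⟩
    have hk : p + k - p = k := by omega
    simp only [Fintype.card_sum, Fintype.card_prod, Fintype.card_fin, hk]
    ring
  have eR : RTy n p ≃ Fin (n * p) := Fintype.equivOfCardEq hcardR
  have hQQt : Qhat * Qhatᵀ = 1 := (Matrix.mul_eq_one_comm_of_equiv eR).mpr hQtQ
  refine ⟨Qhat, hQtQ, hQQt, ?_⟩
  intro X hX Xperp hXp hPP
  have hXpX : Xperpᵀ * X = 0 := by
    have := congrArg Matrix.transpose hXp
    simpa [Matrix.transpose_mul] using this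
  have h1 : ((1 : Matrix (Fin p) (Fin p) ℝ) ⊗ₖ X)ᵀ = (1 : Matrix (Fin p) (Fin p) ℝ) ⊗ₖ Xᵀ := by
    rw [← Matrix.kroneckerMap_transpose, Matrix.transpose_one]
  have h2 : ((1 : Matrix (Fin p) (Fin p) ℝ) ⊗ₖ Xperp)ᵀ
      = (1 : Matrix (Fin p) (Fin p) ℝ) ⊗ₖ Xperpᵀ := by
    rw [← Matrix.kroneckerMap_transpose, Matrix.transpose_one]
  set B := Matrix.fromCols ((1 : Matrix (Fin p) (Fin p) ℝ) ⊗ₖ X)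
      ((1 : Matrix (Fin p) (Fin p) ℝ) ⊗ₖ Xperp) with hB
  have hBtB : Bᵀ * B = 1 := by
    rw [hB, Matrix.transpose_fromCols, h1, h2, Matrix.fromRows_mul_fromCols,
      ← Matrix.mul_kronecker_mul, ← Matrix.mul_kronecker_mul,
      ← Matrix.mul_kronecker_mul, ← Matrix.mul_kronecker_mul,
      hX, hXp, hXpX, hPP, Matrix.mul_one]
    simp [Matrix.fromBlocks_one]
  have hsum : X * Xᵀ + Xperp * Xperpᵀ = 1 := by
    have e2 : (Fin p ⊕ Fin (n - p)) ≃ Fin n := Fintype.equivOfCardEq (by simp; omega)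
    have hCtC : (Matrix.fromCols X Xperp)ᵀ * Matrix.fromCols X Xperp = 1 := by
      rw [Matrix.transpose_fromCols, Matrix.fromRows_mul_fromCols,
        hX, hXp, hXpX, hPP, Matrix.fromBlocks_one]
    have h := (Matrix.mul_eq_one_comm_of_equiv e2).mp hCtC
    rwa [Matrix.transpose_fromCols, Matrix.fromCols_mul_fromRows] at h
  have hBBt : B * Bᵀ = 1 := by
    rw [hB, Matrix.transpose_fromCols, h1, h2, Matrix.fromCols_mul_fromRows,
      ← Matrix.mul_kronecker_mul, ← Matrix.mul_kronecker_mul, Matrix.mul_one,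
      ← Matrix.kronecker_add, hsum, Matrix.one_kronecker_one]
  set Tw : Matrix (Fin p × Fin p) (Fin p × Fin p) ℝ :=
    Matrix.of fun ab cd => if cd = (ab.2, ab.1) then (1:ℝ) else 0 with hTw
  have hMid : Bᵀ * ((Xᵀ ⊗ₖ X) * commMat n p) * B = Matrix.fromBlocks Tw 0 0 0 := by
    rw [hB, Matrix.transpose_fromCols, h1, h2, Matrix.fromRows_mul,
      Matrix.fromRows_mul_fromCols,
      block_eval X X X, block_eval X X Xperp, block_eval X Xperp X, block_eval X Xperp Xperp,
      hX, hXp, hXpX]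
    ext rr cc
    rcases rr with ⟨a, b⟩ | ⟨a, b⟩ <;> rcases cc with ⟨c, d⟩ | ⟨c, d⟩ <;>
      simp only [Matrix.fromBlocks_apply₁₁, Matrix.fromBlocks_apply₁₂,
        Matrix.fromBlocks_apply₂₁, Matrix.fromBlocks_apply₂₂, Matrix.of_apply,
        Matrix.one_apply, Matrix.zero_apply, hTw, mul_zero, zero_mul, Prod.mk.injEq]
    split_ifs <;> simp_all
  have hMQ : (Matrix.fromBlocks Tw 0 0 0 :
        Matrix ((Fin p × Fin p) ⊕ (Fin p × Fin (n - p))) ((Fin p × Fin p) ⊕ (Fin p × Fin (n - p))) ℝ) * Qhat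
      = Matrix.of fun (r : RTy n p) l =>
          Sum.elim (fun q : Fin p × Fin p => vvec n p (ψ.symm l) (Sum.inl (q.2, q.1)))
            (fun _ => 0) r := by
    ext r l
    rcases r with qq | w
    · rw [Matrix.mul_apply, Fintype.sum_sum_type]
      simp only [Matrix.fromBlocks_apply₁₁, Matrix.fromBlocks_apply₁₂, hQhatdef, hTw,
        Matrix.of_apply, Matrix.zero_apply, zero_mul, Finset.sum_const_zero, add_zero,
        ite_mul, one_mul, zero_mul, Sum.elim_inl]
      rw [Finset.sum_ite_eq' Finset.univ ((qq.2, qq.1) : Fin p × Fin p)]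
      simp
    · rw [Matrix.mul_apply, Fintype.sum_sum_type]
      simp
  constructor
  · rw [Matrix.transpose_mul]
    have hassoc : Qhatᵀ * Bᵀ * (B * Qhat) = Qhatᵀ * ((Bᵀ * B) * Qhat) := by
      simp only [Matrix.mul_assoc]
    rw [hassoc, hBtB, Matrix.one_mul, hQtQ]
  constructor
  · have hassoc : B * Qhat * (B * Qhat)ᵀ = B * ((Qhat * Qhatᵀ) * Bᵀ) := by
      rw [Matrix.transpose_mul]; simp only [Matrix.mul_assoc]
    rw [hassoc, hQQt, Matrix.one_mul, hBBt]
  · rw [Matrix.transpose_mul]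
    have hassoc : Qhatᵀ * Bᵀ * ((Xᵀ ⊗ₖ X) * commMat n p) * (B * Qhat)
        = Qhatᵀ * ((Bᵀ * ((Xᵀ ⊗ₖ X) * commMat n p) * B) * Qhat) := by
      simp only [Matrix.mul_assoc]
    rw [hassoc, hMid, hMQ]
    ext k l
    rw [Matrix.mul_apply, Matrix.diagonal_apply, Fintype.sum_sum_type]
    simp only [hQhatdef, Matrix.transpose_apply, Matrix.of_apply, Sum.elim_inl, Sum.elim_inr,
      mul_zero, Finset.sum_const_zero, add_zero]
    have hq : ∑ q : Fin p × Fin p,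
        vvec n p (ψ.symm k) (Sum.inl q) * vvec n p (ψ.symm l) (Sum.inl (q.2, q.1))
        = lam n p (ψ.symm l) * (if (ψ.symm l) = (ψ.symm k) then 1 else 0) := by
      rw [← vvec_quad n p (ψ.symm l) (ψ.symm k)]
      exact Finset.sum_congr rfl fun q _ => mul_comm _ _
    rw [hq]
    by_cases hkl : k = l
    · subst hkl
      rw [if_pos rfl, if_pos rfl, mul_one]
      have := hψval (ψ.symm k)
      rwa [Equiv.apply_symm_apply] at this
    · rw [if_neg (by simpa [Equiv.symm_apply_eq, eq_comm] using hkl), mul_zero,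
        if_neg hkl]
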